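/- Let X be a nonempty set, p a partial metric on X, and {x_n} a sequence in X with r ≥ 0. If {y_n} is a sequence of points each belonging to st-LIM^r x_n, and {y_n} converges to y in the partial metric sense (i.e., lim_{n→∞} p(y_n,y) = p(y,y)), then y also belongs to st-LIM^r x_n. -/

import Mathlib

/-- A partial metric on a set `X`. -/
structure IsPartialMetric {X : Type*} (p : X → X → ℝ) : Prop where
  nonneg : ∀ x y : X, 0 ≤ p x y
  self_le : ∀ x y : X, p x x ≤ p x y
  eq_iff : ∀ x y : X, x = y ↔ p x x = p x y ∧ p x y = p y y
  symm : ∀ x y : X, p x y = p y x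
  triangle : ∀ x y z : X, p x y ≤ p x z + p z y - p z z

open Classical in
/-- `A ⊆ ℕ` has natural density `d`. -/
def HasNatDensity (A : Set ℕ) (d : ℝ) : Prop :=
  Filter.Tendsto
    (fun n : ℕ => (((Finset.range n).filter (fun k => k ∈ A)).card : ℝ) / (n : ℝ))
    Filter.atTop (nhds d)

/-- `l` is a rough statistical limit point of the sequence `x` with roughness degree `r`,
i.e. `l ∈ st-LIM^r x_n`. -/
def RStatLimit {X : Type*} (p : X → X → ℝ) (x : ℕ → X) (r : ℝ) (l : X) : Prop :=
  ∀ ε : ℝ, 0 < ε → HasNatDensity {n : ℕ | r + ε ≤ |p (x n) l - p l l|} 0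

open Classical in
lemma hasNatDensity_zero_of_subset {A B : Set ℕ} (hAB : A ⊆ B)
    (hB : HasNatDensity B 0) : HasNatDensity A 0 := by
  apply squeeze_zero (g := fun n : ℕ =>
      (((Finset.range n).filter (fun k => k ∈ B)).card : ℝ) / (n : ℝ))
  · intro n
    positivity
  · intro n
    apply div_le_div_of_nonneg_right ?_ ?_ |>.trans le_rfl
    all_goals try positivity
    · exact_mod_cast Finset.card_le_card
        (Finset.monotone_filter_right (Finset.range n) (fun x _ hx => hAB hx))
  · exact hB

/-- If a sequence `y_n` of points of `st-LIM^r x_n` converges (in the partial metric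
sense) to `y`, then `y ∈ st-LIM^r x_n`. -/
theorem rStatLimit_mem_of_tendsto
    {X : Type*} [Nonempty X] (p : X → X → ℝ) (hp : IsPartialMetric p)
    (x : ℕ → X) (r : ℝ) (hr : 0 ≤ r)
    (y : ℕ → X) (hy : ∀ n : ℕ, RStatLimit p x r (y n))
    (l : X) (hconv : Filter.Tendsto (fun n : ℕ => p (y n) l) Filter.atTop (nhds (p l l))) :
    RStatLimit p x r l := by
  intro ε hε
  -- choose m with p (y m) l - p l l < ε/2
  have h2 : (0:ℝ) < ε / 2 := by linarith
  obtain ⟨m, hm⟩ := Metric.tendsto_atTop.mp hconv (ε/2) h2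
  have hm' : p (y m) l - p l l < ε / 2 := by
    have := hm m le_rfl
    rw [Real.dist_eq] at this
    have := abs_lt.mp this
    linarith [this.2]
  have key : {n : ℕ | r + ε ≤ |p (x n) l - p l l|} ⊆
      {n : ℕ | r + ε/2 ≤ |p (x n) (y m) - p (y m) (y m)|} := by
    intro n hn
    simp only [Set.mem_setOf_eq] at hn ⊢
    have hll : p l l ≤ p (x n) l := by
      have := hp.self_le l (x n); rw [hp.symm l (x n)] at this; exact this
    have hyy : p (y m) (y m) ≤ p (x n) (y m) := by
      have := hp.self_le (y m) (x n); rw [hp.symm (y m) (x n)] at this; exact this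
    rw [abs_of_nonneg (by linarith)] at hn
    rw [abs_of_nonneg (by linarith)]
    have htri := hp.triangle (x n) l (y m)
    linarith
  exact hasNatDensity_zero_of_subset key (hy m (ε/2) h2)
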